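/- Suppose (θ₁ - 1/λ₁)ᵀ(θ₂ - θ₁) ≥ 0 and (θ₂ - 1/λ₂)ᵀ(θ₂ - θ₁) ≤ 0. Then for every t ≥ 0, θ₂ lies in the ball B_t = {x : ‖x - c_t‖₂ ≤ l_t}, where c_t = (1/2)(tθ₁ - t·(1/λ₁)1 + (1/λ₂)1 + θ₁) and l_t = (1/2)‖tθ₁ - t·(1/λ₁)1 + (1/λ₂)1 - θ₁‖₂. -/
import Mathlib


open RealInnerProductSpace

/-- Under the two variational inequalities, for every `t ≥ 0`, `θ₂` lies in the
ball `B_t` with center `c_t = (1/2)(tθ₁ - t(1/λ₁)1 + (1/λ₂)1 + θ₁)` and radius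
`l_t = (1/2)‖tθ₁ - t(1/λ₁)1 + (1/λ₂)1 - θ₁‖₂`. -/
theorem stmt_5 {n : ℕ} (lam₁ lam₂ : ℝ) (hlam₁ : 0 < lam₁) (hlam₂ : 0 < lam₂)
    (o : EuclideanSpace ℝ (Fin n)) (ho : ∀ i, o i = 1)
    (θ₁ θ₂ : EuclideanSpace ℝ (Fin n))
    (h₁ : 0 ≤ ⟪θ₁ - (1/lam₁) • o, θ₂ - θ₁⟫)
    (h₂ : ⟪θ₂ - (1/lam₂) • o, θ₂ - θ₁⟫ ≤ 0) :
    ∀ t : ℝ, 0 ≤ t →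
      ‖θ₂ - (1/2 : ℝ) • (t • θ₁ - t • ((1/lam₁) • o) + (1/lam₂) • o + θ₁)‖ ≤
        (1/2) * ‖t • θ₁ - t • ((1/lam₁) • o) + (1/lam₂) • o - θ₁‖ := by
  intro t ht
  set u : EuclideanSpace ℝ (Fin n) := t • θ₁ - t • ((1/lam₁) • o) + (1/lam₂) • o with hu
  set a : EuclideanSpace ℝ (Fin n) := θ₂ - u with ha
  set b : EuclideanSpace ℝ (Fin n) := θ₂ - θ₁ with hb
  have hab : ⟪a, b⟫ ≤ 0 := by
    have e : a = (θ₂ - (1/lam₂) • o) - t • (θ₁ - (1/lam₁) • o) := by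
      simp only [ha, hu]; module
    rw [e, inner_sub_left, real_inner_smul_left]
    nlinarith [mul_nonneg ht h₁]
  have e1 : θ₂ - (1/2 : ℝ) • (u + θ₁) = (1/2 : ℝ) • (a + b) := by
    simp only [ha, hb]; module
  have e2 : u - θ₁ = b - a := by simp only [ha, hb]; module
  have key : ‖a + b‖ ≤ ‖b - a‖ := by
    have h1 := norm_add_sq_real a b
    have h2 := norm_sub_sq_real b a
    have hsq : ‖a + b‖ ^ 2 ≤ ‖b - a‖ ^ 2 := by
      rw [h1, h2]; have := real_inner_comm a b; linarith
    exact (pow_le_pow_iff_left₀ (norm_nonneg _) (norm_nonneg _) two_ne_zero).mp hsq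
  calc ‖θ₂ - (1/2 : ℝ) • (u + θ₁)‖ = (1/2) * ‖a + b‖ := by
        rw [e1, norm_smul]; norm_num
    _ ≤ (1/2) * ‖b - a‖ := by linarith
    _ = (1/2) * ‖u - θ₁‖ := by rw [e2]
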